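/- arXiv:math-ph/0509022 — 3 statements merged into one kernel-verified Lean document; each statement's English description precedes it below -/
import Mathlib

section
/- For q ≥ 1 and p ≥ 0, the determinant Δ_q(p) of the (q+1)×(q+1) matrix with entries 1/(j+k+p+1), j,k = 0,…,q, satisfies the recursion Δ_q(p) = (q!)² / ((p+2q+1) ∏_{r=0}^{q−1}(p+q+r+1)²) · Δ_{q−1}(p), with Δ_0(p) = 1/(p+1). -/
open Matrix Finset

private lemma prod_range_sub_nat (n : ℕ) :
    ∏ j ∈ Finset.range n, (n - j) = n.factorial := by
  induction n with
  | zero => simp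
  | succ m ih =>
    rw [Finset.prod_range_succ']
    simp only [Nat.succ_sub_succ, Nat.sub_zero]
    rw [ih, Nat.factorial_succ, mul_comm]

private lemma prod_range_sub_real (n : ℕ) :
    ∏ j ∈ Finset.range n, ((n : ℝ) - j) = n.factorial := by
  have : ∏ j ∈ Finset.range n, ((n : ℝ) - j)
      = ((∏ j ∈ Finset.range n, (n - j) : ℕ) : ℝ) := by
    rw [Nat.cast_prod]
    refine Finset.prod_congr rfl fun j hj => ?_
    rw [Nat.cast_sub (le_of_lt (Finset.mem_range.mp hj))]
  rw [this, prod_range_sub_nat]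

private lemma frac_aux (a b c d : ℝ) (ha : a ≠ 0) (hb : b ≠ 0) (h : c + a = b) :
    d / a = d * c / (a * b) + d / b := by
  have : c = b - a := by linarith
  subst this
  field_simp
  ring

private lemma hilbert_key (n p : ℕ) :
    Matrix.det (Matrix.of fun j k : Fin (n + 1) =>
        (1 : ℝ) / ((j : ℕ) + (k : ℕ) + p + 1))
      = ((n.factorial : ℝ)) ^ 2
          / (((p : ℝ) + 2 * n + 1)
              * ∏ r ∈ Finset.range n, ((p : ℝ) + n + r + 1) ^ 2)
          * Matrix.det (Matrix.of fun j k : Fin n =>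
              (1 : ℝ) / ((j : ℕ) + (k : ℕ) + p + 1)) := by
  set f : ℕ → ℕ → ℝ := fun j k => (j : ℝ) + k + p + 1 with hf_def
  have hf : ∀ j k, f j k ≠ 0 := by
    intro j k
    have : (0 : ℝ) < (j : ℝ) + k + p + 1 := by positivity
    exact ne_of_gt this
  -- matrices
  set M : Matrix (Fin (n + 1)) (Fin (n + 1)) ℝ :=
    Matrix.of (fun j k => 1 / f (j : ℕ) (k : ℕ)) with hM
  set B : Matrix (Fin (n + 1)) (Fin (n + 1)) ℝ :=
    Matrix.of (fun j k => if (j : ℕ) = n then 1 / f n (k : ℕ)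
      else ((n : ℝ) - (j : ℕ)) / (f (j : ℕ) (k : ℕ) * f n (k : ℕ))) with hB
  set C : Matrix (Fin (n + 1)) (Fin (n + 1)) ℝ :=
    Matrix.of (fun j k => if (j : ℕ) = n then 1
      else ((n : ℝ) - (j : ℕ)) / f (j : ℕ) (k : ℕ)) with hC
  set D : Matrix (Fin (n + 1)) (Fin (n + 1)) ℝ :=
    Matrix.of (fun j k =>
      if (j : ℕ) = n then (if (k : ℕ) = n then 1 else 0)
      else if (k : ℕ) = n then ((n : ℝ) - (j : ℕ)) / f (j : ℕ) n
      else ((n : ℝ) - (j : ℕ)) * ((n : ℝ) - (k : ℕ))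
        / (f (j : ℕ) (k : ℕ) * f (j : ℕ) n)) with hD
  -- Step 1 : det M = det B (subtract last row from the others)
  have step1 : M.det = B.det := by
    apply Matrix.det_eq_of_forall_row_eq_smul_add_const
      (fun i : Fin (n + 1) => if (i : ℕ) = n then 0 else 1) (Fin.last n)
    · simp
    · intro i j
      by_cases hi : (i : ℕ) = n
      · simp only [hM, hB, Matrix.of_apply, hi, if_pos rfl, if_true]
        simp
      · have h1 := hf (i : ℕ) (j : ℕ)
        have h2 := hf n (j : ℕ)
        have hsum : ((n : ℝ) - (i : ℕ)) + f (i : ℕ) (j : ℕ) = f n (j : ℕ) := by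
          simp only [hf_def]; ring
        have key := frac_aux _ _ _ (1 : ℝ) h1 h2 hsum
        simp only [one_mul] at key
        simp only [hM, hB, Matrix.of_apply, hi, if_neg hi, Fin.val_last, if_pos rfl,
          ite_true, ite_false, if_false, one_mul]
        exact key
  -- Step 2 : det B = (∏ 1 / f n k) * det C  (factor columns)
  have step2 : B.det = (∏ k : Fin (n + 1), 1 / f n (k : ℕ)) * C.det := by
    have hBC : B = Matrix.of (fun i j : Fin (n + 1) => (1 / f n (j : ℕ)) * C i j) := by
      ext i j
      by_cases hi : (i : ℕ) = n
      · simp [hB, hC, hi]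
      · simp only [hB, hC, Matrix.of_apply, if_neg hi, div_eq_mul_inv, mul_inv, one_mul]
        ring
    rw [hBC, Matrix.det_mul_row]
  -- Step 3 : det C = det D (subtract last column from the others)
  have step3 : C.det = D.det := by
    rw [← Matrix.det_transpose C, ← Matrix.det_transpose D]
    apply Matrix.det_eq_of_forall_row_eq_smul_add_const
      (fun i : Fin (n + 1) => if (i : ℕ) = n then 0 else 1) (Fin.last n)
    · simp
    · intro a b
      by_cases ha : (a : ℕ) = n
      · by_cases hb : (b : ℕ) = n
        · simp [hC, hD, ha, hb]
        · simp only [Matrix.transpose_apply, hC, hD, Matrix.of_apply, ha, hb,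
            Fin.val_last, if_pos rfl, if_neg hb, ite_true, ite_false, if_false]
          simp [ha]
      · by_cases hb : (b : ℕ) = n
        · simp [hC, hD, ha, hb]
        · have h1 := hf (b : ℕ) (a : ℕ)
          have h2 := hf (b : ℕ) n
          have hsum : ((n : ℝ) - (a : ℕ)) + f (b : ℕ) (a : ℕ) = f (b : ℕ) n := by
            simp only [hf_def]; ring
          have key := frac_aux _ _ _ (((n : ℝ) - (b : ℕ))) h1 h2 hsum
          simp only [Matrix.transpose_apply, hC, hD, Matrix.of_apply, ha, hb,
            Fin.val_last, if_pos rfl, if_neg ha, if_neg hb, ite_true, ite_false,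
            if_false, one_mul]
          exact key
  -- Step 4 : expand det D along the last row
  have step4 : D.det =
      (Matrix.of (fun j k : Fin n =>
        ((n : ℝ) - (j : ℕ)) * ((n : ℝ) - (k : ℕ))
          / (f (j : ℕ) (k : ℕ) * f (j : ℕ) n))).det := by
    rw [Matrix.det_succ_row D (Fin.last n)]
    rw [Finset.sum_eq_single (Fin.last n)]
    · have hsub : D.submatrix (Fin.last n).succAbove (Fin.last n).succAbove =
          Matrix.of (fun j k : Fin n =>
            ((n : ℝ) - (j : ℕ)) * ((n : ℝ) - (k : ℕ))
              / (f (j : ℕ) (k : ℕ) * f (j : ℕ) n)) := by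
        ext j k
        have hj : ((Fin.last n).succAbove j : ℕ) = (j : ℕ) := by
          rw [Fin.succAbove_last]; simp
        have hk : ((Fin.last n).succAbove k : ℕ) = (k : ℕ) := by
          rw [Fin.succAbove_last]; simp
        have hj' : ((Fin.last n).succAbove j : ℕ) ≠ n := by rw [hj]; exact Nat.ne_of_lt j.2
        have hk' : ((Fin.last n).succAbove k : ℕ) ≠ n := by rw [hk]; exact Nat.ne_of_lt k.2
        simp only [Matrix.submatrix_apply, hD, Matrix.of_apply, hj, hk,
          if_neg (Nat.ne_of_lt j.2), if_neg (Nat.ne_of_lt k.2)]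
      rw [hsub]
      have hDlast : D (Fin.last n) (Fin.last n) = 1 := by
        simp [hD]
      rw [hDlast]
      have hsgn : ((-1 : ℝ)) ^ ((Fin.last n : ℕ) + (Fin.last n : ℕ)) = 1 := by
        refine Even.neg_one_pow ⟨n, ?_⟩
        simp [Fin.val_last]
      rw [hsgn]
      ring
    · intro b _ hb
      have hb' : (b : ℕ) ≠ n := fun h => hb (Fin.ext (by simp [h]))
      simp [hD, hb']
    · simp
  -- Step 5 : factor rows and columns of the small matrix
  have step5 : (Matrix.of (fun j k : Fin n =>
        ((n : ℝ) - (j : ℕ)) * ((n : ℝ) - (k : ℕ))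
          / (f (j : ℕ) (k : ℕ) * f (j : ℕ) n))).det
      = (∏ j : Fin n, ((n : ℝ) - (j : ℕ)) / f (j : ℕ) n)
        * ((∏ k : Fin n, ((n : ℝ) - (k : ℕ)))
          * (Matrix.of (fun j k : Fin n => 1 / f (j : ℕ) (k : ℕ))).det) := by
    have h1 : (Matrix.of (fun j k : Fin n =>
        ((n : ℝ) - (j : ℕ)) * ((n : ℝ) - (k : ℕ))
          / (f (j : ℕ) (k : ℕ) * f (j : ℕ) n)))
        = Matrix.of (fun j k : Fin n => (((n : ℝ) - (j : ℕ)) / f (j : ℕ) n) *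
            (Matrix.of (fun j k : Fin n => (((n : ℝ) - (k : ℕ)))
              * (Matrix.of (fun j k : Fin n => 1 / f (j : ℕ) (k : ℕ))) j k)) j k) := by
      ext j k
      simp only [Matrix.of_apply, div_eq_mul_inv, mul_inv, one_mul]
      ring
    rw [h1, Matrix.det_mul_column, Matrix.det_mul_row]
  -- combine everything
  rw [step1, step2, step3, step4, step5]
  -- now a pure scalar computation
  set dMn := (Matrix.of (fun j k : Fin n => 1 / f (j : ℕ) (k : ℕ))).det with hdMn
  have hMn : dMn = Matrix.det (Matrix.of fun j k : Fin n =>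
          (1 : ℝ) / ((j : ℕ) + (k : ℕ) + p + 1)) := rfl
  set P : ℝ := ∏ r ∈ Finset.range n, f n r with hP_def
  have hP : P ≠ 0 := Finset.prod_ne_zero_iff.mpr fun r _ => hf n r
  have hfnn := hf n n
  have e1 : (∏ k : Fin (n + 1), 1 / f n (k : ℕ)) = 1 / (P * f n n) := by
    rw [Fin.prod_univ_eq_prod_range (fun k => 1 / f n k) (n + 1)]
    rw [Finset.prod_div_distrib, Finset.prod_const_one, Finset.prod_range_succ]
  have e2 : (∏ j : Fin n, ((n : ℝ) - (j : ℕ)) / f (j : ℕ) n)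
      = (n.factorial : ℝ) / P := by
    rw [Fin.prod_univ_eq_prod_range (fun j => ((n : ℝ) - j) / f j n) n]
    rw [Finset.prod_div_distrib, prod_range_sub_real]
    congr 1
    refine Finset.prod_congr rfl fun r _ => ?_
    simp only [hf_def]; ring
  have e3 : (∏ k : Fin n, ((n : ℝ) - (k : ℕ))) = (n.factorial : ℝ) := by
    rw [Fin.prod_univ_eq_prod_range (fun k => ((n : ℝ) - k)) n]
    exact prod_range_sub_real n
  have e4 : ∏ r ∈ Finset.range n, ((p : ℝ) + n + r + 1) ^ 2 = P ^ 2 := by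
    rw [hP_def, ← Finset.prod_pow]
    refine Finset.prod_congr rfl fun r _ => ?_
    simp only [hf_def]; ring
  have e5 : (p : ℝ) + 2 * n + 1 = f n n := by
    simp only [hf_def]; push_cast; ring
  rw [e1, e2, e3, e4, e5]
  field_simp

theorem hilbert_type_det_recursion (q p : ℕ) (hq : 1 ≤ q) :
    (Matrix.det (Matrix.of fun j k : Fin (q + 1) =>
        (1 : ℝ) / ((j : ℕ) + (k : ℕ) + p + 1))
      = ((q.factorial : ℝ)) ^ 2
          / (((p : ℝ) + 2 * q + 1)
              * ∏ r ∈ Finset.range q, ((p : ℝ) + q + r + 1) ^ 2)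
          * Matrix.det (Matrix.of fun j k : Fin q =>
              (1 : ℝ) / ((j : ℕ) + (k : ℕ) + p + 1)))
    ∧ Matrix.det (Matrix.of fun j k : Fin 1 =>
        (1 : ℝ) / ((j : ℕ) + (k : ℕ) + p + 1)) = 1 / ((p : ℝ) + 1) := by
  constructor
  · exact hilbert_key q p
  · rw [Matrix.det_fin_one]
    norm_num
end

section
/- For q ≥ 1 and p ≥ 0, the determinant Δ_q(p) of the (q+1)×(q+1) matrix with entries 1/(j+k+p+1), j,k = 0,…,q, satisfies Δ_q(p) ≥ ∏_{r=0}^q (r!)² / (p+2q+1)^{(q+1)²}. -/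
open Finset Matrix

theorem prod_range_sub_eq_factorial (n : ℕ) :
    ∏ i ∈ range n, (n - i) = n.factorial := by
  rw [← Finset.prod_range_add_one_eq_factorial, ← Finset.prod_range_reflect]
  exact Finset.prod_congr rfl fun i hi => by
    have := Finset.mem_range.mp hi; omega

theorem cauchy_det (x y : ℕ → ℝ) :
    ∀ n : ℕ, (∀ i < n, ∀ j < n, x i + y j ≠ 0) →
    Matrix.det (Matrix.of fun i j : Fin n => (x (i : ℕ) + y (j : ℕ))⁻¹) =
      (∏ j ∈ range n, ∏ i ∈ range j, (x j - x i) * (y j - y i)) /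
        ∏ i ∈ range n, ∏ j ∈ range n, (x i + y j) := by
  intro n
  induction n with
  | zero => intro _; simp
  | succ n ih =>
    intro h
    set ℓ : Fin (n + 1) := Fin.last n with hℓ
    have hval : ∀ i : Fin (n+1), i ≠ ℓ → (i : ℕ) < n := by
      intro i hi
      have := i.isLt
      have : (i : ℕ) ≠ n := fun e => hi (Fin.ext (by simp [hℓ, e]))
      omega
    set M : Matrix (Fin (n+1)) (Fin (n+1)) ℝ :=
      Matrix.of fun i j : Fin (n+1) => (x (i : ℕ) + y (j : ℕ))⁻¹ with hM
    -- column operation matrix (subtract last column from every other column)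
    set R : Matrix (Fin (n+1)) (Fin (n+1)) ℝ :=
      Matrix.of fun k j : Fin (n+1) => if k = j then 1 else if k = ℓ then -1 else 0 with hR
    have hRdet : R.det = 1 := by
      rw [Matrix.det_of_lowerTriangular R ?_]
      · simp [hR]
      · intro i j hij
        have hij' : (i : Fin (n+1)) < j := hij
        simp only [hR, Matrix.of_apply]
        rw [if_neg (by exact fun e => absurd e (ne_of_lt hij')), if_neg]
        intro e
        exact absurd (e ▸ hij') (by simp [hℓ, Fin.lt_iff_val_lt_val]; omega)
    -- intermediate matrix P
    set P : Matrix (Fin (n+1)) (Fin (n+1)) ℝ :=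
      Matrix.of fun i j : Fin (n+1) =>
        if j = ℓ then 1 else (y n - y (j : ℕ)) * (x (i : ℕ) + y (j : ℕ))⁻¹ with hP
    have hMR : M * R = Matrix.of fun i j : Fin (n+1) => (x (i : ℕ) + y n)⁻¹ * P i j := by
      ext i j
      rw [Matrix.mul_apply]
      by_cases hj : j = ℓ
      · have e1 : ∀ k : Fin (n+1), M i k * R k j = if k = j then M i j else 0 := by
          intro k
          simp only [hR, Matrix.of_apply]
          by_cases hk : k = j
          · subst hk; simp
          · rw [if_neg hk, if_neg (hj ▸ hk), mul_zero, if_neg hk]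
        rw [Finset.sum_congr rfl fun k _ => e1 k, Finset.sum_ite_eq' Finset.univ j]
        simp only [Finset.mem_univ, if_true, hP, hM, Matrix.of_apply, if_pos hj, mul_one]
        rw [hj]; simp [hℓ]
      · have e1 : ∀ k : Fin (n+1), M i k * R k j =
            (if k = j then M i j else 0) + (if k = ℓ then -M i ℓ else 0) := by
          intro k
          simp only [hR, Matrix.of_apply]
          by_cases hk : k = j
          · subst hk; rw [if_pos rfl, if_pos rfl, if_neg hj, mul_one, add_zero]
          · rw [if_neg hk, if_neg hk]
            by_cases hk2 : k = ℓ
            · subst hk2; rw [if_pos rfl, if_pos rfl, zero_add, mul_neg, mul_one]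
            · rw [if_neg hk2, if_neg hk2, mul_zero, add_zero]
        rw [Finset.sum_congr rfl fun k _ => e1 k, Finset.sum_add_distrib,
          Finset.sum_ite_eq' Finset.univ j, Finset.sum_ite_eq' Finset.univ ℓ]
        simp only [Finset.mem_univ, if_true, hP, hM, Matrix.of_apply, if_neg hj]
        have hjn : (j : ℕ) < n := hval j hj
        have hℓn : ((ℓ : Fin (n+1)) : ℕ) = n := by simp [hℓ]
        rw [hℓn]
        have h1 : x (i : ℕ) + y (j : ℕ) ≠ 0 := h _ i.isLt _ (by omega)
        have h2 : x (i : ℕ) + y n ≠ 0 := h _ i.isLt _ (by omega)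
        field_simp
        ring
    -- row operation matrix (subtract last row from every other row)
    set L : Matrix (Fin (n+1)) (Fin (n+1)) ℝ :=
      Matrix.of fun i k : Fin (n+1) => if i = k then 1 else if k = ℓ then -1 else 0 with hL
    have hLdet : L.det = 1 := by
      rw [Matrix.det_of_upperTriangular (M := L) ?_]
      · simp [hL]
      · intro i j hij
        have hij' : (j : Fin (n+1)) < i := hij
        simp only [hL, Matrix.of_apply]
        rw [if_neg (by exact fun e => absurd e (ne_of_gt hij')), if_neg]
        intro e
        exact absurd (e ▸ hij') (by simp [hℓ, Fin.lt_iff_val_lt_val]; omega)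
    -- the matrix after both operations
    set Q : Matrix (Fin (n+1)) (Fin (n+1)) ℝ :=
      Matrix.of fun i j : Fin (n+1) =>
        if i = ℓ then (if j = ℓ then 1 else (y n - y (j:ℕ)) * (x n + y (j:ℕ))⁻¹)
        else if j = ℓ then 0
        else (x n - x (i:ℕ)) * ((y n - y (j:ℕ)) * (x n + y (j:ℕ))⁻¹) * (x (i:ℕ) + y (j:ℕ))⁻¹ with hQ
    have hLP : L * P = Q := by
      ext i j
      rw [Matrix.mul_apply]
      by_cases hi : i = ℓ
      · have e1 : ∀ k : Fin (n+1), L i k * P k j = if k = i then P i j else 0 := by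
          intro k
          simp only [hL, Matrix.of_apply]
          by_cases hk : k = i
          · rw [hk, if_pos rfl, one_mul, if_pos rfl]
          · rw [if_neg (fun e => hk e.symm), if_neg (fun e => hk (e.trans hi.symm)),
              zero_mul, if_neg hk]
        rw [Finset.sum_congr rfl fun k _ => e1 k, Finset.sum_ite_eq' Finset.univ i]
        simp only [Finset.mem_univ, if_true, hQ, hP, Matrix.of_apply, if_pos hi]
        rw [hi]; simp [hℓ]
      · have e1 : ∀ k : Fin (n+1), L i k * P k j =
            (if k = i then P i j else 0) + (if k = ℓ then -(P ℓ j) else 0) := by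
          intro k
          simp only [hL, Matrix.of_apply]
          by_cases hk : k = i
          · rw [hk, if_pos rfl, one_mul, if_pos rfl, if_neg hi, add_zero]
          · rw [if_neg (fun e => hk e.symm), if_neg hk]
            by_cases hk2 : k = ℓ
            · rw [if_pos hk2, if_pos hk2, hk2, zero_add, neg_one_mul]
            · rw [if_neg hk2, if_neg hk2, zero_mul, add_zero]
        rw [Finset.sum_congr rfl fun k _ => e1 k, Finset.sum_add_distrib,
          Finset.sum_ite_eq' Finset.univ i, Finset.sum_ite_eq' Finset.univ ℓ]
        simp only [Finset.mem_univ, if_true, hQ, hP, Matrix.of_apply, if_neg hi]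
        have hℓn : ((ℓ : Fin (n+1)) : ℕ) = n := by simp [hℓ]
        by_cases hj : j = ℓ
        · rw [if_pos hj, if_pos hj, if_pos hj]; ring
        · rw [if_neg hj, if_neg hj, if_neg hj, hℓn]
          have hin : (i : ℕ) < n := hval i hi
          have hjn : (j : ℕ) < n := hval j hj
          have h1 : x (i:ℕ) + y (j:ℕ) ≠ 0 := h _ (by omega) _ (by omega)
          have h2 : x n + y (j:ℕ) ≠ 0 := h _ (by omega) _ (by omega)
          field_simp
          ring
    -- Laplace expansion of Q along the last column
    have hQdet : Q.det =
        Matrix.det (Matrix.of fun i j : Fin n =>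
          (x n - x (i:ℕ)) * ((y n - y (j:ℕ)) * (x n + y (j:ℕ))⁻¹) * (x (i:ℕ) + y (j:ℕ))⁻¹) := by
      rw [Matrix.det_succ_column Q ℓ]
      rw [Finset.sum_eq_single ℓ]
      · have hQℓℓ : Q ℓ ℓ = 1 := by simp [hQ]
        rw [hQℓℓ, mul_one]
        have hsign : ((-1 : ℝ)) ^ ((ℓ:ℕ) + (ℓ:ℕ)) = 1 := by
          have : ((ℓ:ℕ) + (ℓ:ℕ)) = n + n := by simp [hℓ]
          rw [this]; exact Even.neg_one_pow ⟨n, rfl⟩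
        rw [hsign, one_mul]
        congr 1
        ext i j
        have hne : (i.castSucc : Fin (n+1)) ≠ ℓ := (Fin.castSucc_lt_last i).ne
        have hne' : (j.castSucc : Fin (n+1)) ≠ ℓ := (Fin.castSucc_lt_last j).ne
        simp [hℓ, Fin.succAbove_last, hQ, if_neg hne, if_neg hne', Matrix.submatrix_apply]
      · intro i _ hi
        have : Q i ℓ = 0 := by simp [hQ, if_neg hi]
        rw [this, mul_zero, zero_mul]
      · intro habs; exact absurd (Finset.mem_univ ℓ) habs
    -- assemble
    have hih := ih (fun i hi j hj => h i (by omega) j (by omega))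
    have step1 : M.det = (∏ i ∈ range (n+1), (x i + y n)⁻¹) * P.det := by
      rw [show M.det = (M * R).det by rw [Matrix.det_mul, hRdet, mul_one], hMR,
        Matrix.det_mul_column (fun i : Fin (n+1) => (x (i:ℕ) + y n)⁻¹) P,
        Fin.prod_univ_eq_prod_range (fun i => (x i + y n)⁻¹)]
    have step2 : P.det = Q.det := by
      rw [← hLP, Matrix.det_mul, hLdet, one_mul]
    have step3 : Q.det = (∏ i ∈ range n, (x n - x i)) *
        ((∏ j ∈ range n, (y n - y j) * (x n + y j)⁻¹) *
          Matrix.det (Matrix.of fun i j : Fin n => (x (i:ℕ) + y (j:ℕ))⁻¹)) := by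
      rw [hQdet]
      have hsplit : (Matrix.of fun i j : Fin n =>
          (x n - x (i:ℕ)) * ((y n - y (j:ℕ)) * (x n + y (j:ℕ))⁻¹) * (x (i:ℕ) + y (j:ℕ))⁻¹)
          = Matrix.of fun i j : Fin n => (x n - x (i:ℕ)) *
            ((Matrix.of fun i j : Fin n => ((y n - y (j:ℕ)) * (x n + y (j:ℕ))⁻¹) *
              ((Matrix.of fun i j : Fin n => (x (i:ℕ) + y (j:ℕ))⁻¹) i j)) i j) := by
        ext i j; simp [mul_assoc]
      rw [hsplit, Matrix.det_mul_column, Matrix.det_mul_row,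
        Fin.prod_univ_eq_prod_range (fun i => (x n - x i)),
        Fin.prod_univ_eq_prod_range (fun j => (y n - y j) * (x n + y j)⁻¹)]
    rw [step1, step2, step3, hih]
    have ha : x n + y n ≠ 0 := h n (by omega) n (by omega)
    have hA : (∏ i ∈ range n, (x i + y n)) ≠ 0 :=
      Finset.prod_ne_zero_iff.mpr fun i hi => h i (by simp at hi; omega) n (by omega)
    have hE : (∏ j ∈ range n, (x n + y j)) ≠ 0 :=
      Finset.prod_ne_zero_iff.mpr fun j hj => h n (by omega) j (by simp at hj; omega)
    have hD : (∏ i ∈ range n, ∏ j ∈ range n, (x i + y j)) ≠ 0 :=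
      Finset.prod_ne_zero_iff.mpr fun i hi => Finset.prod_ne_zero_iff.mpr
        fun j hj => h i (by simp at hi; omega) j (by simp at hj; omega)
    simp only [Finset.prod_range_succ, Finset.prod_mul_distrib, Finset.prod_inv_distrib]
    field_simp

theorem hilbert_type_det_lower_bound (q p : ℕ) (hq : 1 ≤ q) :
    (∏ r ∈ Finset.range (q + 1), ((r.factorial : ℝ)) ^ 2)
        / ((p : ℝ) + 2 * q + 1) ^ ((q + 1) ^ 2)
      ≤ Matrix.det (Matrix.of fun j k : Fin (q + 1) =>
          (1 : ℝ) / ((j : ℕ) + (k : ℕ) + p + 1)) := by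
  set x : ℕ → ℝ := fun i => (i : ℝ) with hx
  set y : ℕ → ℝ := fun j => (j : ℝ) + p + 1 with hy
  have hpos : ∀ i j : ℕ, 0 < x i + y j := by
    intro i j; simp only [hx, hy]; positivity
  have hME : (Matrix.of fun j k : Fin (q + 1) =>
      (1 : ℝ) / ((j : ℕ) + (k : ℕ) + p + 1)) =
      Matrix.of fun i j : Fin (q+1) => (x (i : ℕ) + y (j : ℕ))⁻¹ := by
    ext i j
    simp only [Matrix.of_apply, one_div, hx, hy]
    congr 1
    ring
  rw [hME, cauchy_det x y (q+1) (fun i _ j _ => (hpos i j).ne')]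
  -- numerator
  have hnum : (∏ j ∈ range (q+1), ∏ i ∈ range j, (x j - x i) * (y j - y i))
      = ∏ r ∈ range (q + 1), ((r.factorial : ℝ)) ^ 2 := by
    refine Finset.prod_congr rfl fun j _ => ?_
    have e1 : ∀ i ∈ range j, (x j - x i) * (y j - y i) = (((j - i : ℕ) : ℝ)) ^ 2 := by
      intro i hi
      have hij : i ≤ j := le_of_lt (Finset.mem_range.mp hi)
      rw [Nat.cast_sub hij]
      simp only [hx, hy, sq]
      ring
    rw [Finset.prod_congr rfl e1, Finset.prod_pow, ← Nat.cast_prod,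
      prod_range_sub_eq_factorial]
  rw [hnum]
  -- denominator bound
  have hc : (0:ℝ) < (p : ℝ) + 2 * q + 1 := by positivity
  have hDpos : 0 < ∏ i ∈ range (q+1), ∏ j ∈ range (q+1), (x i + y j) :=
    Finset.prod_pos fun i _ => Finset.prod_pos fun j _ => hpos i j
  have hDle : (∏ i ∈ range (q+1), ∏ j ∈ range (q+1), (x i + y j))
      ≤ ((p : ℝ) + 2 * q + 1) ^ ((q + 1) ^ 2) := by
    have step : ∀ i ∈ range (q+1), (∏ j ∈ range (q+1), (x i + y j))
        ≤ ((p : ℝ) + 2 * q + 1) ^ (q+1) := by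
      intro i hi
      have hi' : i ≤ q := Nat.lt_succ_iff.mp (Finset.mem_range.mp hi)
      calc (∏ j ∈ range (q+1), (x i + y j))
          ≤ ∏ j ∈ range (q+1), ((p : ℝ) + 2 * q + 1) := by
            refine Finset.prod_le_prod (fun j _ => (hpos i j).le) ?_
            intro j hj
            have hj' : j ≤ q := Nat.lt_succ_iff.mp (Finset.mem_range.mp hj)
            simp only [hx, hy]
            have : (i:ℝ) ≤ q := by exact_mod_cast hi'
            have : (j:ℝ) ≤ q := by exact_mod_cast hj'
            nlinarith
        _ = ((p : ℝ) + 2 * q + 1) ^ (q+1) := by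
            rw [Finset.prod_const, Finset.card_range]
    calc (∏ i ∈ range (q+1), ∏ j ∈ range (q+1), (x i + y j))
        ≤ ∏ i ∈ range (q+1), ((p : ℝ) + 2 * q + 1) ^ (q+1) := by
          refine Finset.prod_le_prod (fun i _ => Finset.prod_nonneg fun j _ => (hpos i j).le)
            step
      _ = ((p : ℝ) + 2 * q + 1) ^ ((q + 1) ^ 2) := by
          rw [Finset.prod_const, Finset.card_range, ← pow_mul, sq]
  have hNnn : 0 ≤ ∏ r ∈ range (q + 1), ((r.factorial : ℝ)) ^ 2 :=
    Finset.prod_nonneg fun r _ => sq_nonneg _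
  exact div_le_div_of_nonneg_left hNnn hDpos hDle
end

section
/- Let M and M̃ be (q+1)×(q+1) matrices with entries M_{jk} = ∫_0^ρ s^{j+k+p} e^{−s} ds and M̃_{jk} = ∫_0^ρ s^{j+k+p} ds = ρ^{j+k+p+1}/(j+k+p+1), where ρ > 0 and p ∈ ℤ≥0. Then det M ≥ e^{−(q+1)ρ} det M̃. -/
set_option maxHeartbeats 1000000

open Matrix in
lemma gram_psd (q p : ℕ) (ρ : ℝ) (hρ : 0 < ρ) (w : ℝ → ℝ)
    (hw : Continuous w) (hw0 : ∀ s ∈ Set.Icc (0:ℝ) ρ, 0 ≤ w s) :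
    (Matrix.of fun j k : Fin (q + 1) =>
      ∫ s in (0:ℝ)..ρ, s ^ ((j : ℕ) + (k : ℕ) + p) * w s).PosSemidef := by
  refine posSemidef_iff_dotProduct_mulVec.mpr ⟨?_, ?_⟩
  · ext j k
    simp only [conjTranspose_apply, of_apply, star_trivial]
    rw [add_comm (k : ℕ) (j : ℕ)]
  · intro x
    have hInt : ∀ (j k : Fin (q + 1)),
        IntervalIntegrable (fun s : ℝ => x j * x k * (s ^ ((j:ℕ) + (k:ℕ) + p) * w s))
          MeasureTheory.volume 0 ρ :=
      fun j k => Continuous.intervalIntegrable (by continuity) 0 ρ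
    have key : dotProduct (star x) ((Matrix.of fun j k : Fin (q + 1) =>
          ∫ s in (0:ℝ)..ρ, s ^ ((j : ℕ) + (k : ℕ) + p) * w s) *ᵥ x)
        = ∫ s in (0:ℝ)..ρ, (∑ j : Fin (q+1), x j * s ^ (j:ℕ))^2 * (s ^ p * w s) := by
      simp only [dotProduct, mulVec, star_trivial, of_apply]
      have hjk : ∀ (j k : Fin (q+1)),
          x j * ((∫ s in (0:ℝ)..ρ, s ^ ((j:ℕ) + (k:ℕ) + p) * w s) * x k)
          = ∫ s in (0:ℝ)..ρ, x j * x k * (s ^ ((j:ℕ) + (k:ℕ) + p) * w s) := by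
        intro j k
        have h1 : x j * ((∫ s in (0:ℝ)..ρ, s ^ ((j:ℕ) + (k:ℕ) + p) * w s) * x k)
            = (x j * x k) * ∫ s in (0:ℝ)..ρ, s ^ ((j:ℕ) + (k:ℕ) + p) * w s := by ring
        rw [h1, ← intervalIntegral.integral_const_mul]
      have hrow : ∀ j : Fin (q+1), x j * (∑ k : Fin (q+1),
          (∫ s in (0:ℝ)..ρ, s ^ ((j:ℕ) + (k:ℕ) + p) * w s) * x k)
          = ∫ s in (0:ℝ)..ρ, ∑ k : Fin (q+1),
            x j * x k * (s ^ ((j:ℕ) + (k:ℕ) + p) * w s) := by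
        intro j
        rw [Finset.mul_sum, Finset.sum_congr rfl (fun k _ => hjk j k),
          ← intervalIntegral.integral_finset_sum (fun k _ => hInt j k)]
      have hsum : (∫ s in (0:ℝ)..ρ, ∑ j : Fin (q+1), ∑ k : Fin (q+1),
            x j * x k * (s ^ ((j:ℕ) + (k:ℕ) + p) * w s))
          = ∑ j : Fin (q+1), ∫ s in (0:ℝ)..ρ, ∑ k : Fin (q+1),
            x j * x k * (s ^ ((j:ℕ) + (k:ℕ) + p) * w s) :=
        intervalIntegral.integral_finset_sum
          (fun j _ => (continuous_finset_sum _ fun k _ =>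
            by continuity : Continuous fun s : ℝ => ∑ k : Fin (q+1),
              x j * x k * (s ^ ((j:ℕ) + (k:ℕ) + p) * w s)).intervalIntegrable 0 ρ)
      have hpt : ∀ s : ℝ, ∑ j : Fin (q+1), ∑ k : Fin (q+1),
            x j * x k * (s ^ ((j:ℕ) + (k:ℕ) + p) * w s)
          = (∑ j : Fin (q+1), x j * s ^ (j:ℕ))^2 * (s ^ p * w s) := by
        intro s
        rw [sq, Finset.sum_mul_sum, Finset.sum_mul]
        refine Finset.sum_congr rfl fun j _ => ?_
        rw [Finset.sum_mul]
        refine Finset.sum_congr rfl fun k _ => ?_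
        rw [pow_add, pow_add]; ring
      rw [Finset.sum_congr rfl (fun j _ => hrow j), ← hsum]
      exact intervalIntegral.integral_congr fun s _ => hpt s
    rw [key]
    apply intervalIntegral.integral_nonneg hρ.le
    intro s hs
    have h1 : (0:ℝ) ≤ s ^ p := pow_nonneg hs.1 p
    have h2 : 0 ≤ w s := hw0 s hs
    positivity

open Matrix in
/-- `det (1 + P) ≥ 1` for `P` positive semidefinite (real). -/
lemma one_le_det_one_add {n : ℕ} {P : Matrix (Fin n) (Fin n) ℝ}
    (hP : P.PosSemidef) : 1 ≤ (1 + P).det := by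
  have h := hP.isHermitian
  set U : Matrix (Fin n) (Fin n) ℝ := (h.eigenvectorUnitary : Matrix (Fin n) (Fin n) ℝ) with hUdef
  have hU : U * star U = 1 := (Matrix.mem_unitaryGroup_iff).mp h.eigenvectorUnitary.2
  have hdecomp : 1 + P = U * (1 + Matrix.diagonal (RCLike.ofReal ∘ h.eigenvalues)) * star U := by
    rw [mul_add, add_mul, mul_one, hU]
    congr 1
    exact h.spectral_theorem
  have hUdet : U.det * (star U).det = 1 := by
    rw [← Matrix.det_mul, hU, Matrix.det_one]
  have hdiag : ((1 : Matrix (Fin n) (Fin n) ℝ)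
        + Matrix.diagonal (RCLike.ofReal ∘ h.eigenvalues)).det
      = ∏ i, (1 + h.eigenvalues i) := by
    rw [← Matrix.diagonal_one, Matrix.diagonal_add, Matrix.det_diagonal]
    simp [Function.comp, RCLike.ofReal_real_eq_id]
  rw [hdecomp, Matrix.det_mul, Matrix.det_mul]
  have huu : U.det * ((1 : Matrix (Fin n) (Fin n) ℝ)
        + Matrix.diagonal (RCLike.ofReal ∘ h.eigenvalues)).det * (star U).det
      = ((1 : Matrix (Fin n) (Fin n) ℝ)
        + Matrix.diagonal (RCLike.ofReal ∘ h.eigenvalues)).det := by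
    rw [mul_comm U.det, mul_assoc, hUdet, mul_one]
  rw [huu, hdiag]
  calc (1:ℝ) = ∏ _i : Fin n, (1:ℝ) := by simp
    _ ≤ ∏ i : Fin n, (1 + h.eigenvalues i) :=
        Finset.prod_le_prod (fun i _ => zero_le_one)
          (fun i _ => by linarith [hP.eigenvalues_nonneg i])

open Matrix in
lemma det_nonneg_of_psd {n : ℕ} {A : Matrix (Fin n) (Fin n) ℝ}
    (hA : A.PosSemidef) : 0 ≤ A.det := by
  rw [hA.isHermitian.det_eq_prod_eigenvalues]
  exact Finset.prod_nonneg fun i _ => by exact_mod_cast hA.eigenvalues_nonneg i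

open scoped MatrixOrder in
open Matrix in
lemma det_mono_psd {n : ℕ} {A B : Matrix (Fin n) (Fin n) ℝ}
    (hA : A.PosSemidef) (hBA : (B - A).PosSemidef) : A.det ≤ B.det := by
  have hB : B.PosSemidef := by
    have := hA.add hBA
    rwa [add_sub_cancel] at this
  by_cases hdet : A.det = 0
  · rw [hdet]; exact det_nonneg_of_psd hB
  · -- A is invertible; let S = sqrt A
    set S := CFC.sqrt A with hSdef
    have hSpsd : S.PosSemidef := (CFC.sqrt_nonneg A).posSemidef
    have hSS : S * S = A := CFC.sqrt_mul_sqrt_self A hA.nonneg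
    have hSdet : S.det * S.det = A.det := by rw [← Matrix.det_mul, hSS]
    have hSdet0 : S.det ≠ 0 := fun h0 => hdet (by rw [← hSdet, h0, mul_zero])
    have hSunit : IsUnit S.det := isUnit_iff_ne_zero.mpr hSdet0
    have hSinv : S * S⁻¹ = 1 := Matrix.mul_nonsing_inv S hSunit
    have hSinv' : S⁻¹ * S = 1 := Matrix.nonsing_inv_mul S hSunit
    obtain ⟨R, hR⟩ : ∃ R, B - A = Rᴴ * R := CStarAlgebra.nonneg_iff_eq_star_mul_self.mp hBA.nonneg
    set T := R * S⁻¹ with hTdef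
    have hSh : Sᴴ = S := hSpsd.isHermitian
    have hTT : Tᴴ * T = S⁻¹ * (Rᴴ * R) * S⁻¹ := by
      rw [hTdef, Matrix.conjTranspose_mul, Matrix.conjTranspose_nonsing_inv, hSh]
      noncomm_ring
    have hBdecomp : B = S * (1 + Tᴴ * T) * S := by
      rw [mul_add, add_mul, mul_one, hSS, hTT]
      have : S * (S⁻¹ * (Rᴴ * R) * S⁻¹) * S = Rᴴ * R := by
        calc S * (S⁻¹ * (Rᴴ * R) * S⁻¹) * S
            = (S * S⁻¹) * (Rᴴ * R) * (S⁻¹ * S) := by noncomm_ring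
          _ = Rᴴ * R := by rw [hSinv, hSinv', one_mul, mul_one]
      rw [this, ← hR, add_sub_cancel]
    have hP : (Tᴴ * T).PosSemidef := posSemidef_conjTranspose_mul_self T
    have h1 : 1 ≤ (1 + Tᴴ * T).det := one_le_det_one_add hP
    have hA0 : 0 ≤ A.det := det_nonneg_of_psd hA
    calc A.det = S.det * 1 * S.det := by rw [mul_one, hSdet]
      _ ≤ S.det * (1 + Tᴴ * T).det * S.det := by
          nlinarith [sq_nonneg S.det, hSdet]
      _ = B.det := by rw [hBdecomp, Matrix.det_mul, Matrix.det_mul]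

theorem gram_det_exp_comparison (q p : ℕ) (ρ : ℝ) (hρ : 0 < ρ) :
    Real.exp (-((q : ℝ) + 1) * ρ)
        * Matrix.det (Matrix.of fun j k : Fin (q + 1) =>
            ρ ^ ((j : ℕ) + (k : ℕ) + p + 1) / (((j : ℕ) + (k : ℕ) + p + 1 : ℕ) : ℝ))
      ≤ Matrix.det (Matrix.of fun j k : Fin (q + 1) =>
          ∫ s in (0:ℝ)..ρ, s ^ ((j : ℕ) + (k : ℕ) + p) * Real.exp (-s)) := by
  set A : Matrix (Fin (q+1)) (Fin (q+1)) ℝ := Matrix.of fun j k : Fin (q + 1) =>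
      ∫ s in (0:ℝ)..ρ, s ^ ((j : ℕ) + (k : ℕ) + p) * Real.exp (-ρ) with hAdef
  set B : Matrix (Fin (q+1)) (Fin (q+1)) ℝ := Matrix.of fun j k : Fin (q + 1) =>
      ∫ s in (0:ℝ)..ρ, s ^ ((j : ℕ) + (k : ℕ) + p) * Real.exp (-s) with hBdef
  have hApsd : A.PosSemidef := gram_psd q p ρ hρ _ (by continuity)
    (fun s _ => (Real.exp_pos _).le)
  have hBApsd : (B - A).PosSemidef := by
    have hpsd := gram_psd q p ρ hρ (fun s => Real.exp (-s) - Real.exp (-ρ)) (by continuity)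
      (fun s hs => sub_nonneg.mpr (Real.exp_le_exp.mpr (by linarith [hs.2])))
    have hEq : (Matrix.of fun j k : Fin (q + 1) =>
        ∫ s in (0:ℝ)..ρ, s ^ ((j : ℕ) + (k : ℕ) + p)
          * (Real.exp (-s) - Real.exp (-ρ))) = B - A := by
      ext j k
      simp only [hAdef, hBdef, Matrix.sub_apply, Matrix.of_apply]
      simp_rw [mul_sub]
      rw [intervalIntegral.integral_sub (Continuous.intervalIntegrable (by continuity) 0 ρ)
        (Continuous.intervalIntegrable (by continuity) 0 ρ)]
    rwa [← hEq]
  have hdet : Real.exp (-((q : ℝ) + 1) * ρ)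
      * Matrix.det (Matrix.of fun j k : Fin (q + 1) =>
          ρ ^ ((j : ℕ) + (k : ℕ) + p + 1) / (((j : ℕ) + (k : ℕ) + p + 1 : ℕ) : ℝ)) = A.det := by
    have hentry : A = Real.exp (-ρ) • (Matrix.of fun j k : Fin (q + 1) =>
        ρ ^ ((j : ℕ) + (k : ℕ) + p + 1) / (((j : ℕ) + (k : ℕ) + p + 1 : ℕ) : ℝ)) := by
      ext j k
      simp only [hAdef, Matrix.of_apply, Matrix.smul_apply, smul_eq_mul]
      rw [intervalIntegral.integral_mul_const, integral_pow,
        zero_pow (by omega : (j:ℕ) + (k:ℕ) + p + 1 ≠ 0)]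
      push_cast
      ring
    rw [hentry, Matrix.det_smul, Fintype.card_fin]
    congr 1
    rw [← Real.exp_nat_mul]
    congr 1
    push_cast
    ring
  rw [hdet]
  exact det_mono_psd hApsd hBApsd
end
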